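/- Let p be a prime, d a natural number with gcd(d, p) = 1, and R a topological space (e.g. a normed commutative ring). For every locally constant function f : ZMod d × ℤ_[p] → R there exists n ∈ ℕ such that f = ∑_{a=0}^{d·p^n − 1} f(a) • χ_{U_{n,a}}, where χ_{U_{n,a}} is the characteristic (locally constant) function of the basic clopen set U_{n,a} = {x ∈ ZMod d × ℤ_[p] : x.1 = a (mod d) and toZModPow n (x.2) = a (mod p^n)}. -/

import Mathlib

open scoped BigOperators

lemma continuous_toZModPow (p : ℕ) [Fact p.Prime] (n : ℕ) :
    Continuous (PadicInt.toZModPow (p := p) n) := by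
  refine IsLocallyConstant.continuous ?_
  rw [IsLocallyConstant.iff_exists_open]
  intro x
  refine ⟨Metric.ball x ((p : ℝ) ^ (-(n : ℤ))), Metric.isOpen_ball, ?_, ?_⟩
  · have hp : (0 : ℝ) < p := by exact_mod_cast (Fact.out : p.Prime).pos
    simpa using zpow_pos hp (-(n : ℤ))
  · intro y hy
    have h : ‖y - x‖ ≤ (p : ℝ) ^ (-(n : ℤ)) := le_of_lt (by
      simpa [dist_eq_norm] using hy)
    rw [PadicInt.norm_le_pow_iff_mem_span_pow] at h
    have := (RingHom.sub_mem_ker_iff (PadicInt.toZModPow (p := p) n)).1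
      (by rwa [PadicInt.ker_toZModPow])
    exact this

open scoped Classical in
/-- The characteristic function of a clopen set, as a locally constant function. -/
noncomputable def charFn {X : Type*} [TopologicalSpace X] (R : Type*) [Zero R] [One R]
    {U : Set X} (hU : IsClopen U) : LocallyConstant X R :=
  ⟨fun x => if x ∈ U then (1 : R) else 0, by
    intro s
    by_cases h1 : (1 : R) ∈ s <;> by_cases h0 : (0 : R) ∈ s
    · have : (fun x => if x ∈ U then (1 : R) else 0) ⁻¹' s = Set.univ := by
        ext x; simp only [Set.mem_preimage, Set.mem_univ, iff_true]
        split_ifs <;> assumption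
      rw [this]; exact isOpen_univ
    · have : (fun x => if x ∈ U then (1 : R) else 0) ⁻¹' s = U := by
        ext x; simp only [Set.mem_preimage]
        split_ifs with h <;> simp [h, h1, h0]
      rw [this]; exact hU.isOpen
    · have : (fun x => if x ∈ U then (1 : R) else 0) ⁻¹' s = Uᶜ := by
        ext x; simp only [Set.mem_preimage, Set.mem_compl_iff]
        split_ifs with h <;> simp [h, h1, h0]
      rw [this]; exact hU.compl.isOpen
    · have : (fun x => if x ∈ U then (1 : R) else 0) ⁻¹' s = ∅ := by
        ext x; simp only [Set.mem_preimage, Set.mem_empty_iff_false, iff_false]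
        split_ifs <;> assumption
      rw [this]; exact isOpen_empty⟩

/-- The basic clopen subset `U_{n, a}` of `ZMod d × ℤ_[p]`. -/
def clopenFrom (p : ℕ) [Fact p.Prime] (d n a : ℕ) : Set (ZMod d × ℤ_[p]) :=
  {x : ZMod d × ℤ_[p] | x.1 = (a : ZMod d) ∧ PadicInt.toZModPow n x.2 = (a : ZMod (p ^ n))}

lemma isClopen_clopenFrom (p : ℕ) [Fact p.Prime] (d n a : ℕ) :
    IsClopen (clopenFrom p d n a) := by
  have h1 : IsClopen (Prod.fst ⁻¹' ({(a : ZMod d)} : Set (ZMod d)) :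
      Set (ZMod d × ℤ_[p])) :=
    (isClopen_discrete _).preimage continuous_fst
  have h2 : IsClopen ((fun x : ZMod d × ℤ_[p] => PadicInt.toZModPow n x.2) ⁻¹'
      ({(a : ZMod (p ^ n))} : Set (ZMod (p ^ n)))) :=
    (isClopen_discrete _).preimage ((continuous_toZModPow p n).comp continuous_snd)
  exact h1.inter h2


/-- Every locally constant function `f` on `ZMod d × ℤ_[p]` is, for some `n`, the sum
over `a < d * p ^ n` of `f a` times the characteristic function of the basic clopen set
`U_{n, a}`. -/
theorem locallyConstant_eq_sum_charFn {p : ℕ} [Fact p.Prime] {d : ℕ} (hd : d.Coprime p)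
    {R : Type*} [NormedCommRing R] (f : LocallyConstant (ZMod d × ℤ_[p]) R) :
    ∃ n : ℕ, f = ∑ a ∈ Finset.range (d * p ^ n),
      f ((a : ZMod d), (a : ℤ_[p])) • charFn R (isClopen_clopenFrom p d n a) := by
  
  have hd0 : d ≠ 0 := by
    rintro rfl
    exact (Fact.out : p.Prime).ne_one (by simpa [Nat.Coprime] using hd)
  haveI : NeZero d := ⟨hd0⟩
  -- Step 1: find n such that f factors through ZMod d × ZMod (p ^ n)
  have step1 : ∃ n : ℕ, ∀ x y : ZMod d × ℤ_[p], x.1 = y.1 →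
      PadicInt.toZModPow n x.2 = PadicInt.toZModPow n y.2 → f x = f y := by
    have key : ∀ c : ZMod d, ∃ n : ℕ, ∀ z w : ℤ_[p],
        ‖z - w‖ ≤ (p : ℝ) ^ (-(n : ℤ)) → f (c, z) = f (c, w) := by
      intro c
      set g : ℤ_[p] → R := fun z => f (c, z) with hg
      have hgl : IsLocallyConstant g :=
        f.isLocallyConstant.comp_continuous (by continuity)
      obtain ⟨δ, hδ, hball⟩ := lebesgue_number_lemma_of_metric (s := (Set.univ : Set ℤ_[p]))
        (c := fun z : ℤ_[p] => g ⁻¹' {g z}) isCompact_univ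
        (fun z => hgl.isOpen_fiber _) (fun z _ => Set.mem_iUnion.2 ⟨z, rfl⟩)
      obtain ⟨n, hn⟩ := PadicInt.exists_pow_neg_lt p hδ
      refine ⟨n, fun z w h => ?_⟩
      obtain ⟨i, hi⟩ := hball z (Set.mem_univ z)
      have hz : z ∈ Metric.ball z δ := Metric.mem_ball_self hδ
      have hw : w ∈ Metric.ball z δ := by
        rw [Metric.mem_ball, dist_eq_norm]
        calc ‖w - z‖ = ‖z - w‖ := by rw [← norm_neg]; ring_nf
        _ ≤ _ := h
        _ < δ := hn
      have h1 := hi hz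
      have h2 := hi hw
      simp only [Set.mem_preimage, Set.mem_singleton_iff] at h1 h2
      exact h1.trans h2.symm
    choose N hN using key
    refine ⟨Finset.sup Finset.univ N, fun x y h1 h2 => ?_⟩
    have hle : N x.1 ≤ Finset.sup Finset.univ N := Finset.le_sup (Finset.mem_univ _)
    have hnorm : ‖x.2 - y.2‖ ≤ (p : ℝ) ^ (-(N x.1 : ℤ)) := by
      have hmem : x.2 - y.2 ∈ Ideal.span {(p : ℤ_[p]) ^ (Finset.sup Finset.univ N)} := by
        rw [← PadicInt.ker_toZModPow, RingHom.mem_ker, map_sub, h2, sub_self]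
      have := (PadicInt.norm_le_pow_iff_mem_span_pow _ _).2 hmem
      refine this.trans ?_
      apply zpow_le_zpow_right₀
      · exact_mod_cast (Fact.out : p.Prime).one_le
      · omega
    calc f x = f (x.1, x.2) := rfl
    _ = f (x.1, y.2) := hN x.1 x.2 y.2 hnorm
    _ = f (y.1, y.2) := by rw [h1]
    _ = f y := rfl
  obtain ⟨n, hn⟩ := step1
  refine ⟨n, ?_⟩
  have hpn : (0 : ℕ) < p ^ n := pow_pos (Fact.out : p.Prime).pos n
  haveI : NeZero (p ^ n) := ⟨hpn.ne'⟩
  have hdp : 0 < d * p ^ n := Nat.mul_pos (Nat.pos_of_ne_zero hd0) hpn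
  have hcop : d.Coprime (p ^ n) := hd.pow_right n
  ext x
  -- evaluate the sum pointwise
  have hsum : (∑ a ∈ Finset.range (d * p ^ n),
      f ((a : ZMod d), (a : ℤ_[p])) • charFn R (isClopen_clopenFrom p d n a)) x
      = ∑ a ∈ Finset.range (d * p ^ n),
      (f ((a : ZMod d), (a : ℤ_[p])) • charFn R (isClopen_clopenFrom p d n a)) x := by
    change (LocallyConstant.coeFnAddMonoidHom (X := ZMod d × ℤ_[p]) (Y := R)
      (∑ a ∈ Finset.range (d * p ^ n), _)) x = _
    rw [map_sum]
    simp [Finset.sum_apply]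
  rw [hsum]
  -- find the unique `a`
  obtain ⟨k, hk1, hk2⟩ := Nat.chineseRemainder hcop x.1.val (PadicInt.toZModPow n x.2).val
  set a := k % (d * p ^ n) with ha_def
  have ha_lt : a < d * p ^ n := Nat.mod_lt _ hdp
  have hamod : a ≡ k [MOD d * p ^ n] := Nat.mod_modEq k (d * p ^ n)
  have ha1 : (a : ZMod d) = x.1 := by
    have : a ≡ x.1.val [MOD d] := (hamod.of_mul_right _).trans hk1
    rw [(ZMod.natCast_eq_natCast_iff _ _ _).2 this, ZMod.natCast_rightInverse x.1]
  have ha2 : (a : ZMod (p ^ n)) = PadicInt.toZModPow n x.2 := by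
    have : a ≡ (PadicInt.toZModPow n x.2).val [MOD p ^ n] :=
      (hamod.of_mul_left _).trans hk2
    rw [(ZMod.natCast_eq_natCast_iff _ _ _).2 this,
      ZMod.natCast_rightInverse (PadicInt.toZModPow n x.2)]
  have hxmem : x ∈ clopenFrom p d n a := ⟨ha1.symm, ha2.symm⟩
  rw [Finset.sum_eq_single a]
  · have : (charFn R (isClopen_clopenFrom p d n a)) x = 1 := by
      simp only [charFn, LocallyConstant.coe_mk, if_pos hxmem]
      exact if_pos hxmem
    rw [LocallyConstant.smul_apply, this, smul_eq_mul, mul_one]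
    refine hn x ((a : ZMod d), (a : ℤ_[p])) ha1.symm ?_
    rw [map_natCast (PadicInt.toZModPow n) a, ha2]
  · intro b hb hba
    have hbmem : x ∉ clopenFrom p d n b := by
      intro ⟨hb1, hb2⟩
      apply hba
      have e1 : b ≡ a [MOD d] := by
        rw [← ZMod.natCast_eq_natCast_iff]
        rw [ha1, hb1]
      have e2 : b ≡ a [MOD p ^ n] := by
        rw [← ZMod.natCast_eq_natCast_iff]
        rw [ha2, hb2]
      have := (Nat.modEq_and_modEq_iff_modEq_mul hcop).1 ⟨e1, e2⟩
      have hb_lt : b < d * p ^ n := Finset.mem_range.1 hb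
      calc b = b % (d * p ^ n) := (Nat.mod_eq_of_lt hb_lt).symm
      _ = a % (d * p ^ n) := this
      _ = a := Nat.mod_eq_of_lt ha_lt
    have : (charFn R (isClopen_clopenFrom p d n b)) x = 0 := by
      simp only [charFn, LocallyConstant.coe_mk, if_neg hbmem]
      exact if_neg hbmem
    rw [LocallyConstant.smul_apply, this, smul_eq_mul, mul_zero]
  · intro h
    exact absurd (Finset.mem_range.2 ha_lt) h
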